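/- (Partial sum of Gauss series as terminating ₃F₂) For natural number n and complex a, b, c with c and 1+b not nonpositive integers: ∑_{k=0}^{n} (a)_k (b)_k / ((c)_k k!) = ((1+b)_n / n!) · ∑_{k=0}^{n} (−n)_k (b)_k (c−a)_k / ((1+b)_k (c)_k k!). -/

import Mathlib

open Complex Finset

/-- Pochhammer symbol `(x)_k = x (x+1) ⋯ (x+k-1)`. -/
noncomputable def poch (x : ℂ) (k : ℕ) : ℂ := ∏ i ∈ Finset.range k, (x + i)

/-- Beta function `B(x,y) = Γ(x) Γ(y) / Γ(x+y)`. -/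
noncomputable def cBeta (x y : ℂ) : ℂ :=
  Complex.Gamma x * Complex.Gamma y / Complex.Gamma (x + y)



lemma poch_zero (x : ℂ) : poch x 0 = 1 := rfl

lemma poch_succ (x : ℂ) (k : ℕ) : poch x (k + 1) = poch x k * (x + k) :=
  Finset.prod_range_succ _ _

lemma poch_add (x : ℂ) (k m : ℕ) : poch x (k + m) = poch x k * poch (x + k) m := by
  unfold poch
  rw [Finset.prod_range_add]
  congr 1
  refine Finset.prod_congr rfl fun i _ => ?_
  push_cast; ring

lemma poch_one (x : ℂ) : poch x 1 = x := by simp [poch]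

lemma poch_ne_zero {x : ℂ} (h : ∀ i : ℕ, x ≠ -(i : ℂ)) (k : ℕ) : poch x k ≠ 0 := by
  unfold poch
  refine Finset.prod_ne_zero_iff.2 fun i _ => ?_
  intro h0
  exact h i (by linear_combination h0)

lemma sum_poch_div_factorial (x : ℂ) (M : ℕ) :
    ∑ m ∈ Finset.range (M + 1), poch x m / (Nat.factorial m : ℂ)
      = poch (x + 1) M / (Nat.factorial M : ℂ) := by
  induction M with
  | zero => simp [poch]
  | succ M ih =>
    rw [Finset.sum_range_succ, ih]
    have hM : ((Nat.factorial M : ℂ)) ≠ 0 := by exact_mod_cast Nat.factorial_ne_zero M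
    have hM1 : ((Nat.factorial (M+1) : ℂ)) ≠ 0 := by exact_mod_cast Nat.factorial_ne_zero (M+1)
    have h1 : poch x (M + 1) = x * poch (x + 1) M := by
      rw [show M + 1 = 1 + M from by ring, poch_add, poch_one]
      push_cast; ring_nf
    have h2 : poch (x + 1) (M + 1) = poch (x + 1) M * (x + 1 + M) := poch_succ _ _
    have h3 : (Nat.factorial (M+1) : ℂ) = (M + 1) * Nat.factorial M := by
      push_cast [Nat.factorial_succ]; ring
    rw [div_add_div _ _ hM hM1, div_eq_div_iff (mul_ne_zero hM hM1) hM1, h1, h2, h3]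
    ring

lemma chu_vandermonde (j : ℕ) : ∀ a c : ℂ,
    ∑ k ∈ Finset.range (j + 1),
      ((-1 : ℂ)) ^ k * (j.choose k : ℂ) * poch (c - a) k * poch (c + k) (j - k)
      = poch a j := by
  induction j with
  | zero => intro a c; simp [poch]
  | succ j ih =>
    intro a c
    set X : ℕ → ℂ := fun k => poch (c - a) k * poch (c + k) (j + 1 - k) with hX
    have step1 : ∑ k ∈ Finset.range (j + 1 + 1), ((-1 : ℂ)) ^ k * ((j+1).choose k : ℂ) * X k
        = ∑ k ∈ Finset.range (j + 1), ((-1 : ℂ)) ^ k * (j.choose k : ℂ) * (X k - X (k+1)) := by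
      rw [Finset.sum_range_succ' (fun k => ((-1 : ℂ)) ^ k * ((j+1).choose k : ℂ) * X k)]
      have e2 : ∀ k, ((-1 : ℂ)) ^ (k+1) * ((j+1).choose (k+1) : ℂ) * X (k+1)
          = -(((-1 : ℂ)) ^ k * (j.choose k : ℂ) * X (k+1))
            + ((-1 : ℂ)) ^ (k+1) * (j.choose (k+1) : ℂ) * X (k+1) := by
        intro k
        rw [Nat.choose_succ_succ]
        push_cast; ring
      rw [Finset.sum_congr rfl (fun k _ => e2 k), Finset.sum_add_distrib]
      have e4 : ∑ k ∈ Finset.range (j + 1), ((-1 : ℂ)) ^ (k+1) * (j.choose (k+1) : ℂ) * X (k+1)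
          = ∑ k ∈ Finset.range j, ((-1 : ℂ)) ^ (k+1) * (j.choose (k+1) : ℂ) * X (k+1) := by
        rw [Finset.sum_range_succ, Nat.choose_eq_zero_of_lt (by omega)]
        simp
      have e5 : ∑ k ∈ Finset.range (j + 1), ((-1 : ℂ)) ^ k * (j.choose k : ℂ) * X k
          = (∑ k ∈ Finset.range j, ((-1 : ℂ)) ^ (k+1) * (j.choose (k+1) : ℂ) * X (k+1))
            + ((-1 : ℂ)) ^ 0 * ((j+1).choose 0 : ℂ) * X 0 := by
        rw [Finset.sum_range_succ' (fun k => ((-1 : ℂ)) ^ k * (j.choose k : ℂ) * X k)]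
        simp
      have e6 : ∑ k ∈ Finset.range (j+1), ((-1 : ℂ)) ^ k * (j.choose k : ℂ) * (X k - X (k+1))
          = ∑ k ∈ Finset.range (j+1), ((-1 : ℂ)) ^ k * (j.choose k : ℂ) * X k
            + ∑ k ∈ Finset.range (j+1), -(((-1 : ℂ)) ^ k * (j.choose k : ℂ) * X (k+1)) := by
        rw [← Finset.sum_add_distrib]
        exact Finset.sum_congr rfl fun k _ => by ring
      rw [e4, e6, e5]
      ring
    have conv1 : ∑ k ∈ Finset.range (j + 1 + 1),
        ((-1 : ℂ)) ^ k * ((j+1).choose k : ℂ) * poch (c - a) k * poch (c + k) (j + 1 - k)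
        = ∑ k ∈ Finset.range (j + 1 + 1), ((-1 : ℂ)) ^ k * ((j+1).choose k : ℂ) * X k :=
      Finset.sum_congr rfl fun k _ => by simp only [hX]; ring
    rw [conv1, step1]
    have key : ∀ k ∈ Finset.range (j+1), ((-1 : ℂ)) ^ k * (j.choose k : ℂ) * (X k - X (k+1))
        = a * (((-1 : ℂ)) ^ k * (j.choose k : ℂ) * poch ((c+1) - (a+1)) k * poch ((c+1) + k) (j - k)) := by
      intro k hk
      have hk' : k ≤ j := by simpa [Nat.lt_succ_iff] using hk
      have h1 : j + 1 - k = 1 + (j - k) := by omega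
      have h2 : j + 1 - (k + 1) = j - k := by omega
      have hXk : X k = poch (c - a) k * ((c + k) * poch (c + k + 1) (j - k)) := by
        simp only [hX]
        rw [h1, poch_add, poch_one]
        norm_num
      have hXk1 : X (k+1) = poch (c - a) k * (c - a + k) * poch (c + k + 1) (j - k) := by
        simp only [hX]
        rw [h2, poch_succ, show (c + ((k+1 : ℕ) : ℂ)) = c + k + 1 from by push_cast; ring]
      rw [hXk, hXk1,
        show (c+1) - (a+1) = c - a from by ring,
        show ((c+1) + (k:ℂ)) = c + k + 1 from by ring]
      ring
    rw [Finset.sum_congr rfl key, ← Finset.mul_sum, ih (a+1) (c+1),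
      show j + 1 = 1 + j from by ring, poch_add, poch_one]
    norm_num

lemma poch_neg_nat (n : ℕ) : ∀ k, k ≤ n →
    poch (-(n : ℂ)) k * ((n - k).factorial : ℂ) = (-1) ^ k * (n.factorial : ℂ) := by
  intro k
  induction k with
  | zero => intro _; simp [poch]
  | succ k ih =>
    intro h
    have hk : k ≤ n := by omega
    have this1 := ih hk
    have hc1 : (((n - k).factorial : ℕ) : ℂ)
        = ((n : ℂ) - k) * (((n - (k+1)).factorial : ℕ) : ℂ) := by
      rw [show n - k = (n - (k+1)) + 1 from by omega, Nat.factorial_succ]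
      push_cast [Nat.cast_sub hk]
      have : ((n - (k+1) : ℕ) : ℂ) = (n : ℂ) - (k + 1) := by
        push_cast [Nat.cast_sub h]; ring
      rw [this]; ring
    rw [hc1] at this1
    rw [poch_succ]
    linear_combination -this1

theorem partial_sum_gauss_as_3F2 (n : ℕ) (a b c : ℂ)
    (hc : ∀ k : ℕ, c ≠ -(k : ℂ)) (hb : ∀ k : ℕ, 1 + b ≠ -(k : ℂ)) :
    ∑ k ∈ Finset.range (n + 1), poch a k * poch b k / (poch c k * (Nat.factorial k : ℂ)) =
      (poch (1 + b) n / (Nat.factorial n : ℂ)) *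
        ∑ k ∈ Finset.range (n + 1),
          poch (-(n : ℂ)) k * poch b k * poch (c - a) k /
            (poch (1 + b) k * poch c k * (Nat.factorial k : ℂ)) := by
  have hcz : ∀ k, poch c k ≠ 0 := poch_ne_zero hc
  have hbz : ∀ k, poch (1 + b) k ≠ 0 := poch_ne_zero hb
  have hfz : ∀ k : ℕ, ((k.factorial : ℕ) : ℂ) ≠ 0 := fun k => by
    exact_mod_cast k.factorial_ne_zero
  have hck : ∀ k : ℕ, ∀ i : ℕ, (c + (k : ℂ)) ≠ -(i : ℂ) := by
    intro k i hx
    exact hc (k + i) (by push_cast; linear_combination hx)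
  have hckz : ∀ k m : ℕ, poch (c + (k : ℂ)) m ≠ 0 := fun k => poch_ne_zero (hck k)
  set g : ℕ → ℕ → ℂ := fun j k =>
    (-1 : ℂ) ^ k * poch (c - a) k * poch b j /
      (poch c k * (k.factorial : ℂ) * ((j - k).factorial : ℂ)) with hg
  calc
    ∑ j ∈ Finset.range (n + 1), poch a j * poch b j / (poch c j * (j.factorial : ℂ))
        = ∑ j ∈ Finset.range (n + 1), ∑ k ∈ Finset.range (j + 1), g j k := by
      refine Finset.sum_congr rfl fun j _ => ?_
      rw [← chu_vandermonde j a c, Finset.sum_mul, Finset.sum_div]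
      refine Finset.sum_congr rfl fun k hk => ?_
      have hk' : k ≤ j := by simpa [Nat.lt_succ_iff] using hk
      have hsplit : poch c j = poch c k * poch (c + k) (j - k) := by
        rw [← poch_add]; congr 1; omega
      have hfact : ((j.factorial : ℕ) : ℂ)
          = (j.choose k : ℂ) * (k.factorial : ℂ) * ((j - k).factorial : ℂ) := by
        exact_mod_cast (Nat.choose_mul_factorial_mul_factorial hk').symm
      have hchz : (j.choose k : ℂ) ≠ 0 := by
        exact_mod_cast Nat.choose_pos hk' |>.ne'
      have h1 := hcz k; have h2 := hckz k (j - k); have h3 := hfz k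
      have h4 := hfz (j - k)
      simp only [hg]
      rw [hsplit, hfact]
      field_simp
    _ = ∑ k ∈ Finset.range (n + 1), ∑ j ∈ Finset.Ico k (n + 1), g j k := by
      simpa only [Finset.range_eq_Ico] using
        (Finset.sum_Ico_Ico_comm 0 (n + 1) (fun i j => g j i)).symm
    _ = ∑ k ∈ Finset.range (n + 1),
          (-1 : ℂ) ^ k * poch (c - a) k * poch b k * poch (b + k + 1) (n - k) /
            (poch c k * (k.factorial : ℂ) * ((n - k).factorial : ℂ)) := by
      refine Finset.sum_congr rfl fun k hk => ?_
      have hk' : k ≤ n := by simpa [Nat.lt_succ_iff] using hk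
      rw [Finset.sum_Ico_eq_sum_range]
      have hstep : ∀ m, g (k + m) k
          = ((-1 : ℂ) ^ k * poch (c - a) k * poch b k / (poch c k * (k.factorial : ℂ)))
            * (poch (b + k) m / (m.factorial : ℂ)) := by
        intro m
        have h1 := hcz k; have h3 := hfz k; have h4 := hfz m
        simp only [hg]
        rw [poch_add b k m, show k + m - k = m from by omega]
        field_simp
      rw [Finset.sum_congr rfl (fun m _ => hstep m), ← Finset.mul_sum,
        show n + 1 - k = (n - k) + 1 from by omega, sum_poch_div_factorial,
        show (b + (k : ℂ)) + 1 = b + k + 1 from by ring]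
      have h1 := hcz k; have h3 := hfz k; have h4 := hfz (n - k)
      field_simp
    _ = (poch (1 + b) n / (Nat.factorial n : ℂ)) *
        ∑ k ∈ Finset.range (n + 1),
          poch (-(n : ℂ)) k * poch b k * poch (c - a) k /
            (poch (1 + b) k * poch c k * (Nat.factorial k : ℂ)) := by
      rw [Finset.mul_sum]
      refine Finset.sum_congr rfl fun k hk => ?_
      have hk' : k ≤ n := by simpa [Nat.lt_succ_iff] using hk
      have hsplitb : poch (1 + b) n = poch (1 + b) k * poch (b + k + 1) (n - k) := by
        rw [show n = k + (n - k) from by omega, poch_add,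
          show ((1 + b) + (k : ℂ)) = b + k + 1 from by ring]
        rw [show k + (n - k) - k = n - k from by omega]
      have hneg : poch (-(n : ℂ)) k
          = (-1) ^ k * (n.factorial : ℂ) / (((n - k).factorial : ℕ) : ℂ) := by
        rw [eq_div_iff (hfz (n - k))]
        exact poch_neg_nat n k hk'
      have h1 := hcz k; have h2 := hbz k; have h3 := hfz k
      have h4 := hfz (n - k); have h5 := hfz n
      rw [hsplitb]
      field_simp
      linear_combination (-(poch (c - a) k * poch b k * poch (b + (k:ℂ) + 1) (n - k))) * poch_neg_nat n k hk'
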